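/- Let S be the quintic del Pezzo surface with Aut(S) ≅ S5, and let Ξ be the set of 15 intersection points of pairs of lines on S. Then S5 acts transitively on Ξ, the stabilizer of each point of Ξ is a Sylow 2-subgroup of S5 (dihedral of order 8), and the correspondence Ξ → {Sylow 2-subgroups of S5} sending a point to its stabilizer is a bijection. -/

import Mathlib

/-- Vertices of the Petersen graph, modelled as the Kneser graph `K(5,2)`:
2-element subsets of a 5-element set. -/
abbrev KneserVert : Type := {s : Finset (Fin 5) // s.card = 2}

/-- The Petersen graph: two 2-element subsets of `{1,…,5}` are adjacent iff
they are disjoint.  It is the incidence graph of the 10 lines on a quintic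
del Pezzo surface (vertices = lines, adjacency = meeting). -/
def petersenGraph : SimpleGraph KneserVert where
  Adj a b := Disjoint a.1 b.1
  symm := ⟨fun a b h => h.symm⟩
  loopless := by
    constructor
    intro a h
    have h0 : a.1 = ⊥ := disjoint_self.mp h
    have h2 := a.2
    rw [h0] at h2
    simp at h2

/-- The automorphism group of a simple graph, as a subgroup of the permutation
group of its vertex set. -/
def graphAut {V : Type*} (G : SimpleGraph V) : Subgroup (Equiv.Perm V) where
  carrier := {e | ∀ a b : V, G.Adj (e a) (e b) ↔ G.Adj a b}
  one_mem' := by intro a b; simp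
  mul_mem' := by
    intro e f he hf a b
    simpa [Equiv.Perm.mul_apply] using (he (f a) (f b)).trans (hf a b)
  inv_mem' := by
    intro e he a b
    have h := he (e⁻¹ a) (e⁻¹ b)
    simpa using h.symm

/-- The stabilizer of an unordered pair (e.g. an edge of a graph) in the
permutation group of `V`. -/
def sym2Stab {V : Type*} (z : Sym2 V) : Subgroup (Equiv.Perm V) where
  carrier := {g | Sym2.map (⇑g) z = z}
  one_mem' := by simp [Sym2.map_id']
  mul_mem' := by
    intro g h hg hh
    simp only [Set.mem_setOf_eq] at hg hh ⊢
    rw [Equiv.Perm.coe_mul, ← Sym2.map_map, hh, hg]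
  inv_mem' := by
    intro g hg
    simp only [Set.mem_setOf_eq] at hg ⊢
    conv_lhs => rw [← hg]
    rw [Sym2.map_map]
    simp [Sym2.map_id']

/-! ### Auxiliary development -/

namespace DP5

open Equiv Finset

/-! #### The natural action of `S₅` on Kneser vertices -/

def mapVert (g : Equiv.Perm (Fin 5)) (a : KneserVert) : KneserVert :=
  ⟨a.1.map g.toEmbedding, by rw [Finset.card_map]; exact a.2⟩

lemma mapVert_mapVert (g h : Equiv.Perm (Fin 5)) (a : KneserVert) :
    mapVert g (mapVert h a) = mapVert (g * h) a := by
  apply Subtype.ext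
  show (a.1.map h.toEmbedding).map g.toEmbedding = a.1.map (g * h).toEmbedding
  rw [Finset.map_map]
  congr 1

lemma mapVert_one (a : KneserVert) : mapVert 1 a = a := by
  apply Subtype.ext
  show a.1.map _ = a.1
  ext x
  simp [mapVert]
  exact Iff.rfl

def natPerm (g : Equiv.Perm (Fin 5)) : Equiv.Perm KneserVert where
  toFun := mapVert g
  invFun := mapVert g⁻¹
  left_inv := fun a => by rw [mapVert_mapVert, inv_mul_cancel, mapVert_one]
  right_inv := fun a => by rw [mapVert_mapVert, mul_inv_cancel, mapVert_one]

def natHom : Equiv.Perm (Fin 5) →* Equiv.Perm KneserVert where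
  toFun := natPerm
  map_one' := Equiv.ext fun a => mapVert_one a
  map_mul' := fun g h => Equiv.ext fun a => (mapVert_mapVert g h a).symm

@[simp] lemma natHom_apply (g : Equiv.Perm (Fin 5)) (a : KneserVert) :
    natHom g a = mapVert g a := rfl

lemma natHom_mem_aut (g : Equiv.Perm (Fin 5)) : natHom g ∈ graphAut petersenGraph := by
  intro a b
  show Disjoint (a.1.map g.toEmbedding) (b.1.map g.toEmbedding) ↔ Disjoint a.1 b.1
  exact Finset.disjoint_map _

set_option maxRecDepth 4000 in
lemma natHom_inj : Function.Injective natHom := by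
  rw [injective_iff_map_eq_one]
  have key : ∀ g : Equiv.Perm (Fin 5), (∀ a : KneserVert, mapVert g a = a) → g = 1 := by decide
  intro g hg
  exact key g fun a => by rw [← natHom_apply, hg]; rfl

/-! #### Decidable combinatorial facts about the Petersen graph -/

def Meets (a b : KneserVert) : Prop := a ≠ b ∧ ¬ Disjoint a.1 b.1

noncomputable instance (a b : KneserVert) : Decidable (Meets a b) := by
  unfold Meets; infer_instance

def Star4OK (a b c d : KneserVert) : Prop :=
  Meets a b → Meets a c → Meets a d → Meets b c → Meets b d → Meets c d →
    ∃ x : Fin 5, x ∈ a.1 ∧ x ∈ b.1 ∧ x ∈ c.1 ∧ x ∈ d.1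

noncomputable instance (a b c d : KneserVert) : Decidable (Star4OK a b c d) := by
  unfold Star4OK; infer_instance

set_option maxRecDepth 10000 in
lemma L_star4 : ∀ a b c d : KneserVert, Star4OK a b c d := by decide

lemma L_pair : ∀ (s : Finset (Fin 5)), s.card = 2 → ∀ x y : Fin 5, x ∈ s → y ∈ s → x ≠ y →
    s = {x, y} := by decide

def star5 (i : Fin 5) : Finset KneserVert := Finset.univ.filter (fun a => i ∈ a.1)

def StarElts (i : Fin 5) : Prop := ∃ a b c d : KneserVert,
    a ∈ star5 i ∧ b ∈ star5 i ∧ c ∈ star5 i ∧ d ∈ star5 i ∧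
    a ≠ b ∧ a ≠ c ∧ a ≠ d ∧ b ≠ c ∧ b ≠ d ∧ c ≠ d ∧
    (∀ x : KneserVert, x ∈ star5 i → x = a ∨ x = b ∨ x = c ∨ x = d)

set_option synthInstance.maxHeartbeats 1000000 in
set_option synthInstance.maxSize 2000 in
noncomputable instance (i : Fin 5) : Decidable (StarElts i) := by
  unfold StarElts star5; infer_instance

set_option maxRecDepth 20000 in
lemma L_starelts : ∀ i : Fin 5, StarElts i := by decide

lemma L_star_card : ∀ x : Fin 5, (star5 x).card = 4 := by decide

lemma L_star_inj : ∀ i j : Fin 5, star5 i = star5 j → i = j := by decide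

lemma L_star_mem : ∀ (i : Fin 5) (a : KneserVert), a ∈ star5 i ↔ i ∈ a.1 := by decide

lemma L_meets : ∀ (x : Fin 5) (a b : KneserVert), x ∈ a.1 → x ∈ b.1 → a ≠ b → Meets a b := by
  decide

def TransOK (a b c d : KneserVert) : Prop := Disjoint a.1 b.1 → Disjoint c.1 d.1 →
    ∃ g : Equiv.Perm (Fin 5), mapVert g a = c ∧ mapVert g b = d

noncomputable instance (a b c d : KneserVert) : Decidable (TransOK a b c d) := by
  unfold TransOK; infer_instance

set_option maxHeartbeats 40000000 in
set_option maxRecDepth 10000 in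
lemma L_trans : ∀ a b c d : KneserVert, TransOK a b c d := by decide

def v01 : KneserVert := ⟨{0,1}, rfl⟩
def v23 : KneserVert := ⟨{2,3}, rfl⟩

def StabPred (a b : KneserVert) (g : Equiv.Perm (Fin 5)) : Prop :=
  (mapVert g a = a ∧ mapVert g b = b) ∨ (mapVert g a = b ∧ mapVert g b = a)

noncomputable instance (a b : KneserVert) (g : Equiv.Perm (Fin 5)) :
    Decidable (StabPred a b g) := by unfold StabPred; infer_instance

lemma L_disj01 : Disjoint v01.1 v23.1 := by decide

set_option maxRecDepth 4000 in
lemma L_card8 : (Finset.univ.filter (StabPred v01 v23)).card = 8 := by decide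

def UniqOK (c d : KneserVert) : Prop := Disjoint c.1 d.1 →
  (∀ g : Equiv.Perm (Fin 5), StabPred v01 v23 g → StabPred c d g) →
  ((c = v01 ∧ d = v23) ∨ (c = v23 ∧ d = v01))

noncomputable instance (c d : KneserVert) : Decidable (UniqOK c d) := by
  unfold UniqOK; infer_instance

set_option maxRecDepth 10000 in
set_option maxHeartbeats 1000000 in
lemma L_uniq : ∀ c d : KneserVert, UniqOK c d := by decide

/-! #### The dihedral group of order 8 inside `S₅` -/

def cc : Equiv.Perm (Fin 5) := Equiv.swap 0 2 * Equiv.swap 2 1 * Equiv.swap 1 3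
def tt : Equiv.Perm (Fin 5) := Equiv.swap 0 1

def dihFun : DihedralGroup 4 → Equiv.Perm (Fin 5)
  | .r i => cc ^ i.val
  | .sr i => tt * cc ^ i.val

def dihHom : DihedralGroup 4 →* Equiv.Perm (Fin 5) where
  toFun := dihFun
  map_one' := by decide
  map_mul' := by decide

lemma L_dihInj : ∀ x y : DihedralGroup 4, dihFun x = dihFun y → x = y := by decide

lemma L_dihMem : ∀ x : DihedralGroup 4, StabPred v01 v23 (dihFun x) := by decide

/-! #### Every automorphism of the Petersen graph is induced by `S₅` -/

theorem aut_eq_nat (e : Equiv.Perm KneserVert) (he : e ∈ graphAut petersenGraph) :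
    ∃ g : Equiv.Perm (Fin 5), natHom g = e := by
  have hadj : ∀ a b : KneserVert, Disjoint (e a).1 (e b).1 ↔ Disjoint a.1 b.1 := he
  have C : ∀ i : Fin 5, ∃ x : Fin 5, (star5 i).image e = star5 x := by
    intro i
    obtain ⟨a, b, c, d, ha, hb, hc, hd, hab, hac, had, hbc, hbd, hcd, hall⟩ := L_starelts i
    have hmeets : ∀ u v : KneserVert, u ∈ star5 i → v ∈ star5 i → u ≠ v →
        Meets (e u) (e v) := by
      intro u v hu hv huv
      have h0 := L_meets i u v ((L_star_mem i u).mp hu) ((L_star_mem i v).mp hv) huv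
      exact ⟨fun h => huv (e.injective h), fun h => h0.2 ((hadj u v).mp h)⟩
    obtain ⟨x, hxa, hxb, hxc, hxd⟩ := L_star4 (e a) (e b) (e c) (e d)
      (hmeets a b ha hb hab) (hmeets a c ha hc hac) (hmeets a d ha hd had)
      (hmeets b c hb hc hbc) (hmeets b d hb hd hbd) (hmeets c d hc hd hcd)
    refine ⟨x, Finset.eq_of_subset_of_card_le ?_ ?_⟩
    · intro y hy
      obtain ⟨u, hu, rfl⟩ := Finset.mem_image.mp hy
      rcases hall u hu with rfl | rfl | rfl | rfl
      · exact (L_star_mem x _).mpr hxa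
      · exact (L_star_mem x _).mpr hxb
      · exact (L_star_mem x _).mpr hxc
      · exact (L_star_mem x _).mpr hxd
    · rw [L_star_card, Finset.card_image_of_injective _ e.injective, L_star_card]
  choose π hπ using C
  have πinj : Function.Injective π := by
    intro i j hij
    apply L_star_inj
    apply Finset.image_injective e.injective
    rw [hπ i, hπ j, hij]
  refine ⟨Equiv.ofBijective π (Finite.injective_iff_bijective.mp πinj), Equiv.ext fun a => ?_⟩
  obtain ⟨i, j, hij, hval⟩ := Finset.card_eq_two.mp a.2
  have hi : i ∈ a.1 := by rw [hval]; simp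
  have hj : j ∈ a.1 := by rw [hval]; simp
  have hpi : π i ∈ (e a).1 := by
    have h1 : e a ∈ (star5 i).image e := Finset.mem_image_of_mem e ((L_star_mem i a).mpr hi)
    rw [hπ i] at h1
    exact (L_star_mem _ _).mp h1
  have hpj : π j ∈ (e a).1 := by
    have h1 : e a ∈ (star5 j).image e := Finset.mem_image_of_mem e ((L_star_mem j a).mpr hj)
    rw [hπ j] at h1
    exact (L_star_mem _ _).mp h1
  have hne : π i ≠ π j := fun h => hij (πinj h)
  have hea : (e a).1 = {π i, π j} := L_pair (e a).1 (e a).2 _ _ hpi hpj hne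
  apply Subtype.ext
  show a.1.map _ = (e a).1
  rw [hval, hea]
  ext y
  simp [Equiv.ofBijective_apply]

end DP5

namespace DP5

open Equiv Pointwise

def Hs (w : Sym2 KneserVert) : Subgroup (Equiv.Perm (Fin 5)) :=
  Subgroup.comap natHom (sym2Stab w)

lemma mem_Hs {w : Sym2 KneserVert} {g : Equiv.Perm (Fin 5)} :
    g ∈ Hs w ↔ Sym2.map (⇑(natHom g)) w = w := Iff.rfl

lemma mem_Hs_pair {g : Equiv.Perm (Fin 5)} {a b : KneserVert} :
    g ∈ Hs s(a, b) ↔ StabPred a b g := by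
  rw [mem_Hs, Sym2.map_pair_eq, Sym2.eq_iff]
  exact Iff.rfl

lemma natHom_comp (x y : Equiv.Perm (Fin 5)) :
    ⇑(natHom (x * y)) = ⇑(natHom x) ∘ ⇑(natHom y) := by
  funext a
  show natHom (x * y) a = natHom x (natHom y a)
  rw [map_mul]
  rfl

lemma map_natHom_mul (x y : Equiv.Perm (Fin 5)) (w : Sym2 KneserVert) :
    Sym2.map (⇑(natHom (x * y))) w = Sym2.map (⇑(natHom x)) (Sym2.map (⇑(natHom y)) w) := by
  rw [natHom_comp, Sym2.map_map]

lemma sym2_cancel (g : Equiv.Perm (Fin 5)) (w : Sym2 KneserVert) :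
    Sym2.map (⇑(natHom g⁻¹)) (Sym2.map (⇑(natHom g)) w) = w := by
  rw [← map_natHom_mul, inv_mul_cancel, map_one]
  show Sym2.map (⇑(1 : Equiv.Perm KneserVert)) w = w
  rw [Equiv.Perm.coe_one, Sym2.map_id]
  rfl

lemma sym2_cancel' (g : Equiv.Perm (Fin 5)) (w : Sym2 KneserVert) :
    Sym2.map (⇑(natHom g)) (Sym2.map (⇑(natHom g⁻¹)) w) = w := by
  have := sym2_cancel g⁻¹ w
  rwa [inv_inv] at this

lemma Hs_conj (g : Equiv.Perm (Fin 5)) (w : Sym2 KneserVert) :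
    Hs (Sym2.map (⇑(natHom g)) w) = Subgroup.map (MulAut.conj g).toMonoidHom (Hs w) := by
  ext x
  rw [Subgroup.mem_map]
  constructor
  · intro hx
    rw [mem_Hs] at hx
    refine ⟨g⁻¹ * x * g, ?_, ?_⟩
    · rw [mem_Hs, mul_assoc, map_natHom_mul, map_natHom_mul, hx]
      exact sym2_cancel g w
    · show g * (g⁻¹ * x * g) * g⁻¹ = x
      group
  · rintro ⟨y, hy, rfl⟩
    rw [mem_Hs] at hy ⊢
    show Sym2.map (⇑(natHom (g * y * g⁻¹))) _ = _
    rw [mul_assoc, map_natHom_mul, map_natHom_mul, sym2_cancel g w, hy]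

lemma edge_map (g : Equiv.Perm (Fin 5)) (w : Sym2 KneserVert)
    (hw : w ∈ petersenGraph.edgeSet) :
    Sym2.map (⇑(natHom g)) w ∈ petersenGraph.edgeSet := by
  induction w using Sym2.ind with
  | _ c d =>
    rw [SimpleGraph.mem_edgeSet] at hw
    rw [Sym2.map_pair_eq, SimpleGraph.mem_edgeSet]
    exact (natHom_mem_aut g c d).mpr hw

lemma edge01 : s(v01, v23) ∈ petersenGraph.edgeSet := by
  rw [SimpleGraph.mem_edgeSet]
  exact L_disj01

lemma exists_conj (w : Sym2 KneserVert) (hw : w ∈ petersenGraph.edgeSet) :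
    ∃ g : Equiv.Perm (Fin 5), Sym2.map (⇑(natHom g)) s(v01, v23) = w := by
  induction w using Sym2.ind with
  | _ c d =>
    rw [SimpleGraph.mem_edgeSet] at hw
    obtain ⟨g, h1, h2⟩ := L_trans v01 v23 c d L_disj01 hw
    refine ⟨g, ?_⟩
    rw [Sym2.map_pair_eq]
    show s(mapVert g v01, mapVert g v23) = s(c, d)
    rw [h1, h2]

lemma card_Hs0 : Nat.card (Hs s(v01, v23)) = 8 := by
  have h1 : Nat.card (Hs s(v01, v23))
      = Nat.card {g : Equiv.Perm (Fin 5) // StabPred v01 v23 g} :=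
    Nat.card_congr (Equiv.subtypeEquivRight fun g => mem_Hs_pair)
  rw [h1, Nat.card_eq_fintype_card, Fintype.card_subtype, L_card8]

lemma card_Hs (w : Sym2 KneserVert) (hw : w ∈ petersenGraph.edgeSet) :
    Nat.card (Hs w) = 8 := by
  obtain ⟨g, hg⟩ := exists_conj w hw
  rw [← hg, Hs_conj]
  rw [← card_Hs0]
  exact (Nat.card_congr
    (Subgroup.equivMapOfInjective _ (MulAut.conj g).toMonoidHom
      (MulAut.conj g).injective).toEquiv).symm

lemma card_perm5 : Nat.card (Equiv.Perm (Fin 5)) = 120 := by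
  rw [Nat.card_eq_fintype_card, Fintype.card_perm, Fintype.card_fin]
  norm_num [Nat.factorial]

lemma fact3 : (Nat.card (Equiv.Perm (Fin 5))).factorization 2 = 3 := by
  rw [card_perm5]
  have h : (120 : ℕ) = 2 ^ 3 * 15 := by norm_num
  rw [h, Nat.factorization_mul (by norm_num) (by norm_num)]
  rw [Finsupp.add_apply, Nat.Prime.factorization_pow,
    Nat.factorization_eq_zero_of_not_dvd (by norm_num)]
  · simp
  · exact Nat.prime_two

def mkSylow (H : Subgroup (Equiv.Perm (Fin 5))) (h : Nat.card H = 8) :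
    Sylow 2 (Equiv.Perm (Fin 5)) :=
  Sylow.ofCard H (by rw [h, fact3]; norm_num)

lemma coe_mkSylow (H : Subgroup (Equiv.Perm (Fin 5))) (h : Nat.card H = 8) :
    (mkSylow H h : Subgroup (Equiv.Perm (Fin 5))) = H :=
  Sylow.coe_ofCard H _

lemma dih0 : Nonempty ((Hs s(v01, v23)) ≃* DihedralGroup 4) := by
  have hmem : ∀ x : DihedralGroup 4, dihHom x ∈ Hs s(v01, v23) := fun x =>
    mem_Hs_pair.mpr (L_dihMem x)
  let f : DihedralGroup 4 →* Hs s(v01, v23) := dihHom.codRestrict _ hmem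
  have finj : Function.Injective f := fun x y hxy =>
    L_dihInj x y (congrArg Subtype.val hxy)
  have hb : Function.Bijective f := by
    rw [Nat.bijective_iff_injective_and_card]
    refine ⟨finj, ?_⟩
    rw [card_Hs0, Nat.card_eq_fintype_card, DihedralGroup.card]
  exact ⟨(MulEquiv.ofBijective f hb).symm⟩

lemma Hs_inj (w₁ w₂ : Sym2 KneserVert) (h₁ : w₁ ∈ petersenGraph.edgeSet)
    (h₂ : w₂ ∈ petersenGraph.edgeSet) (h : Hs w₁ = Hs w₂) : w₁ = w₂ := by
  obtain ⟨g, hg⟩ := exists_conj w₁ h₁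
  set w₂' : Sym2 KneserVert := Sym2.map (⇑(natHom g⁻¹)) w₂ with hw₂'
  have hg₂ : Sym2.map (⇑(natHom g)) w₂' = w₂ := sym2_cancel' g w₂
  have hH : Hs s(v01, v23) = Hs w₂' := by
    apply Subgroup.map_injective (G := Equiv.Perm (Fin 5))
      (f := (MulAut.conj g).toMonoidHom) (MulAut.conj g).injective
    rw [← Hs_conj, ← Hs_conj, hg, hg₂, h]
  have hw₂'e : w₂' ∈ petersenGraph.edgeSet := edge_map g⁻¹ w₂ h₂
  -- now apply L_uniq
  revert hH hg₂ hw₂'e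
  clear hw₂'
  induction w₂' using Sym2.ind with
  | _ c d =>
    intro hmap hH hw₂'e
    rw [SimpleGraph.mem_edgeSet] at hw₂'e
    have key := L_uniq c d hw₂'e (fun x hx => mem_Hs_pair.mp (hH ▸ mem_Hs_pair.mpr hx))
    have heq : s(c, d) = s(v01, v23) := by
      rcases key with ⟨rfl, rfl⟩ | ⟨rfl, rfl⟩
      · rfl
      · exact Sym2.eq_swap
    rw [← hg, ← hmap, heq]

end DP5

namespace DP5

def permCongrMul {α β : Type*} (E : α ≃ β) : Equiv.Perm α ≃* Equiv.Perm β where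
  toEquiv := E.permCongr
  map_mul' := fun f g => Equiv.ext fun x => by
    simp [Equiv.permCongr_apply, Equiv.Perm.mul_apply]

@[simp] lemma permCongrMul_apply {α β : Type*} (E : α ≃ β) (f : Equiv.Perm α) (x : β) :
    permCongrMul E f x = E (f (E.symm x)) := rfl

end DP5


set_option maxHeartbeats 1000000 in
/-- Let `S` be the quintic del Pezzo surface with `Aut(S) ≅ S₅`, whose 10 lines
form the Petersen graph, and let `Ξ` be the set of 15 intersection points of
pairs of lines, i.e. the edges of the Petersen graph.  Then `S₅` acts
transitively on `Ξ`, the stabilizer of each point of `Ξ` is a Sylow 2-subgroup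
of `S₅` (dihedral of order 8), and the map `Ξ → {Sylow 2-subgroups of S₅}`
sending a point to its stabilizer is a bijection. -/
theorem S5_action_on_intersection_points_of_quintic_delPezzo
    (Line : Type) (Gr : SimpleGraph Line)
    (hGr : Nonempty (Gr ≃g petersenGraph))
    (φ : Equiv.Perm (Fin 5) →* Equiv.Perm Line)
    (hφaut : ∀ g : Equiv.Perm (Fin 5), φ g ∈ graphAut Gr)
    (hφinj : Function.Injective φ) :
    (∀ z₁ z₂ : Sym2 Line, z₁ ∈ Gr.edgeSet → z₂ ∈ Gr.edgeSet →
      ∃ g : Equiv.Perm (Fin 5), Sym2.map (⇑(φ g)) z₁ = z₂) ∧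
    (∀ z : Sym2 Line, z ∈ Gr.edgeSet →
      (∃ P : Sylow 2 (Equiv.Perm (Fin 5)),
        Subgroup.comap φ (sym2Stab z) = (P : Subgroup (Equiv.Perm (Fin 5)))) ∧
      Nonempty ((Subgroup.comap φ (sym2Stab z)) ≃* DihedralGroup 4)) ∧
    (∀ P : Sylow 2 (Equiv.Perm (Fin 5)),
      ∃! z : Sym2 Line, z ∈ Gr.edgeSet ∧
        Subgroup.comap φ (sym2Stab z) = (P : Subgroup (Equiv.Perm (Fin 5)))) := by
  classical
  obtain ⟨iso⟩ := hGr
  set E : Line ≃ KneserVert := iso.toEquiv with hEdef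
  let ψ : Equiv.Perm (Fin 5) →* Equiv.Perm KneserVert :=
    (DP5.permCongrMul E).toMonoidHom.comp φ
  have hψ_apply : ∀ g x, ψ g x = E (φ g (E.symm x)) := fun g x => rfl
  have hψaut : ∀ g, ψ g ∈ graphAut petersenGraph := by
    intro g a b
    show petersenGraph.Adj (E (φ g (E.symm a))) (E (φ g (E.symm b))) ↔ petersenGraph.Adj a b
    calc petersenGraph.Adj (E (φ g (E.symm a))) (E (φ g (E.symm b)))
        ↔ Gr.Adj (φ g (E.symm a)) (φ g (E.symm b)) := iso.map_adj_iff
      _ ↔ Gr.Adj (E.symm a) (E.symm b) := hφaut g _ _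
      _ ↔ petersenGraph.Adj (E (E.symm a)) (E (E.symm b)) := iso.map_adj_iff.symm
      _ ↔ petersenGraph.Adj a b := by rw [Equiv.apply_symm_apply, Equiv.apply_symm_apply]
  have hψinj : Function.Injective ψ := fun a b h => hφinj ((DP5.permCongrMul E).injective h)
  -- the induced automorphism θ of S₅
  have hθex : ∀ g, ∃ g', DP5.natHom g' = ψ g := fun g => DP5.aut_eq_nat (ψ g) (hψaut g)
  choose θf hθ using hθex
  have θone : θf 1 = 1 := DP5.natHom_inj (by rw [hθ, map_one, map_one])
  have θmul : ∀ x y, θf (x * y) = θf x * θf y := fun x y =>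
    DP5.natHom_inj (by rw [map_mul, hθ, hθ, hθ, map_mul])
  let θ : Equiv.Perm (Fin 5) →* Equiv.Perm (Fin 5) :=
    { toFun := θf, map_one' := θone, map_mul' := θmul }
  have θinj : Function.Injective θ := by
    intro x y h
    apply hψinj
    rw [← hθ x, ← hθ y]
    exact congrArg DP5.natHom h
  let θe : Equiv.Perm (Fin 5) ≃* Equiv.Perm (Fin 5) :=
    MulEquiv.ofBijective θ (Finite.injective_iff_bijective.mp θinj)
  have θe_coe : ∀ g, θe g = θf g := fun g => rfl
  have hθe : ∀ g, DP5.natHom (θe g) = ψ g := fun g => hθ g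
  have hθes : ∀ g, ⇑(ψ (θe.symm g)) = ⇑(DP5.natHom g) := by
    intro g
    rw [← hθe (θe.symm g), θe.apply_symm_apply]
  -- bridge between the two sides
  have hES : Function.Injective (Sym2.map ⇑E) := Sym2.map.injective E.injective
  have bridge : ∀ (g) (z : Sym2 Line),
      Sym2.map ⇑(ψ g) (Sym2.map ⇑E z) = Sym2.map ⇑E (Sym2.map ⇑(φ g) z) := by
    intro g z
    rw [Sym2.map_map, Sym2.map_map]
    congr 1
    funext x
    show ψ g (E x) = E (φ g x)
    rw [hψ_apply, Equiv.symm_apply_apply]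
  have hedge : ∀ z ∈ Gr.edgeSet, Sym2.map ⇑E z ∈ petersenGraph.edgeSet := by
    intro z hz
    induction z using Sym2.ind with
    | _ x y =>
      rw [SimpleGraph.mem_edgeSet] at hz
      rw [Sym2.map_pair_eq, SimpleGraph.mem_edgeSet]
      exact iso.map_adj_iff.mpr hz
  have hedge' : ∀ w ∈ petersenGraph.edgeSet, Sym2.map ⇑E.symm w ∈ Gr.edgeSet := by
    intro w hw
    induction w using Sym2.ind with
    | _ x y =>
      rw [SimpleGraph.mem_edgeSet] at hw
      rw [Sym2.map_pair_eq, SimpleGraph.mem_edgeSet]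
      have := iso.map_adj_iff (v := E.symm x) (w := E.symm y)
      rw [show iso (E.symm x) = E (E.symm x) from rfl, show iso (E.symm y) = E (E.symm y) from rfl,
        Equiv.apply_symm_apply, Equiv.apply_symm_apply] at this
      exact this.mp hw
  have hEcancel : ∀ w : Sym2 KneserVert, Sym2.map ⇑E (Sym2.map ⇑E.symm w) = w := by
    intro w
    rw [Sym2.map_map]
    have h : ⇑E ∘ ⇑E.symm = id := funext fun x => E.apply_symm_apply x
    rw [h, Sym2.map_id]
    rfl
  -- stabilizer translation
  have hstab : ∀ z : Sym2 Line, Subgroup.comap φ (sym2Stab z)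
      = Subgroup.comap θe.toMonoidHom (DP5.Hs (Sym2.map ⇑E z)) := by
    intro z
    ext g
    simp only [Subgroup.mem_comap]
    show Sym2.map ⇑(φ g) z = z
      ↔ Sym2.map ⇑(DP5.natHom (θe g)) (Sym2.map ⇑E z) = Sym2.map ⇑E z
    rw [hθe, bridge]
    exact ⟨fun h => by rw [h], fun h => hES h⟩
  refine ⟨?_, ?_, ?_⟩
  · -- transitivity
    intro z₁ z₂ hz₁ hz₂
    obtain ⟨g₁, hg₁⟩ := DP5.exists_conj _ (hedge z₁ hz₁)
    obtain ⟨g₂, hg₂⟩ := DP5.exists_conj _ (hedge z₂ hz₂)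
    refine ⟨θe.symm (g₂ * g₁⁻¹), ?_⟩
    apply hES
    rw [← bridge, hθes]
    rw [← hg₁, ← DP5.map_natHom_mul, inv_mul_cancel_right]
    exact hg₂
  · -- stabilizers are Sylow 2-subgroups, dihedral of order 8
    intro z hz
    have hw := hedge z hz
    have hcomap := hstab z
    have hcard : Nat.card (Subgroup.comap φ (sym2Stab z)) = 8 := by
      rw [hcomap, Subgroup.comap_equiv_eq_map_symm', ← DP5.card_Hs _ hw]
      exact (Nat.card_congr (Subgroup.equivMapOfInjective _ _ θe.symm.injective).toEquiv).symm
    constructor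
    · exact ⟨DP5.mkSylow _ hcard, (DP5.coe_mkSylow _ hcard).symm⟩
    · obtain ⟨g, hg⟩ := DP5.exists_conj _ hw
      obtain ⟨d0⟩ := DP5.dih0
      have e1 : (Subgroup.comap φ (sym2Stab z))
          ≃* Subgroup.map θe.symm.toMonoidHom (DP5.Hs (Sym2.map ⇑E z)) :=
        MulEquiv.subgroupCongr (by rw [hcomap, Subgroup.comap_equiv_eq_map_symm'])
      have e2 : DP5.Hs (Sym2.map ⇑E z)
          ≃* Subgroup.map θe.symm.toMonoidHom (DP5.Hs (Sym2.map ⇑E z)) :=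
        θe.symm.subgroupMap _
      have e3 : (DP5.Hs s(DP5.v01, DP5.v23)) ≃* DP5.Hs (Sym2.map ⇑E z) := by
      -- via conjugation
        have hH : DP5.Hs (Sym2.map ⇑E z)
            = Subgroup.map (MulAut.conj g).toMonoidHom (DP5.Hs s(DP5.v01, DP5.v23)) := by
          rw [← hg, DP5.Hs_conj]
        exact (Subgroup.equivMapOfInjective _ _ (MulAut.conj g).injective).trans
          (MulEquiv.subgroupCongr hH.symm)
      exact ⟨(e1.trans e2.symm).trans (e3.symm.trans d0)⟩
  · -- bijection with Sylow 2-subgroups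
    intro P
    have hP8 : Nat.card (P : Subgroup (Equiv.Perm (Fin 5))) = 8 := by
      have h := P.card_eq_multiplicity
      rw [DP5.fact3] at h
      rw [h]
      norm_num
    have hK8 : Nat.card (Subgroup.map θe.toMonoidHom (P : Subgroup (Equiv.Perm (Fin 5)))) = 8 := by
      rw [← hP8]
      exact (Nat.card_congr (Subgroup.equivMapOfInjective _ _ θe.injective).toEquiv).symm
    obtain ⟨g, hg⟩ := MulAction.exists_smul_eq (Equiv.Perm (Fin 5))
      (DP5.mkSylow _ DP5.card_Hs0) (DP5.mkSylow _ hK8)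
    have hsub : Subgroup.map (MulAut.conj g).toMonoidHom (DP5.Hs s(DP5.v01, DP5.v23))
        = Subgroup.map θe.toMonoidHom (P : Subgroup (Equiv.Perm (Fin 5))) := by
      have h1 := congrArg (fun Q : Sylow 2 (Equiv.Perm (Fin 5)) =>
        (Q : Subgroup (Equiv.Perm (Fin 5)))) hg
      rw [DP5.coe_mkSylow] at h1
      rw [← h1, Sylow.coe_subgroup_smul, DP5.coe_mkSylow]
      ext x
      rw [Subgroup.mem_smul_pointwise_iff_exists, Subgroup.mem_map]
      exact Iff.rfl
    set w : Sym2 KneserVert := Sym2.map (⇑(DP5.natHom g)) s(DP5.v01, DP5.v23) with hwdef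
    have hwE : w ∈ petersenGraph.edgeSet := DP5.edge_map g _ DP5.edge01
    have hHsw : DP5.Hs w = Subgroup.map θe.toMonoidHom (P : Subgroup (Equiv.Perm (Fin 5))) := by
      rw [hwdef, DP5.Hs_conj, hsub]
    refine ⟨Sym2.map ⇑E.symm w, ⟨hedge' w hwE, ?_⟩, ?_⟩
    · rw [hstab, hEcancel, hHsw, Subgroup.comap_map_eq_self_of_injective θe.injective]
    · rintro z' ⟨hz', hP'⟩
      have h1 : DP5.Hs (Sym2.map ⇑E z') = DP5.Hs w := by
        apply Subgroup.comap_injective (f := θe.toMonoidHom) θe.surjective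
        rw [← hstab, hP', hHsw, Subgroup.comap_map_eq_self_of_injective θe.injective]
      have h2 := DP5.Hs_inj _ _ (hedge z' hz') hwE h1
      apply hES
      rw [h2, hEcancel]
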